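/- If q = (q_1,...,q_N) is a contraction of p = (p_1,...,p_N) in E^n, then there is an analytic contraction of p to q in E^{2n}: a motion p(t), t ∈ [0,1], in E^{2n} with analytic coordinate functions, p(0) = (p, 0), p(1) = (q, 0) (under the embedding E^n × {0} ⊆ E^{2n}), and each pairwise distance ‖p_i(t) − p_j(t)‖ monotone non-increasing in t. -/

import Mathlib

open Set

/-- The canonical inclusion of `Eⁿ` into `Eᵐ` (for `n ≤ m`), extending by zero coordinates. -/
def euclInclusion (n m : ℕ) (x : EuclideanSpace ℝ (Fin n)) : EuclideanSpace ℝ (Fin m) :=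
  WithLp.toLp 2 (fun j => if h : (j : ℕ) < n then x ⟨j, h⟩ else 0)

/-- Inclusion into the second block of coordinates. -/
def shiftIncl (n : ℕ) (x : EuclideanSpace ℝ (Fin n)) : EuclideanSpace ℝ (Fin (2 * n)) :=
  WithLp.toLp 2 (fun k => if h : (k : ℕ) < n then 0 else x ⟨(k : ℕ) - n, by have := k.isLt; omega⟩)

/-- The analytic motion. -/
noncomputable def leapMap (n : ℕ) (x y : EuclideanSpace ℝ (Fin n)) (t : ℝ) :
    EuclideanSpace ℝ (Fin (2 * n)) :=
  (Real.cos (Real.pi * t / 2)) ^ 2 • euclInclusion n (2 * n) x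
    + (Real.sin (Real.pi * t / 2)) ^ 2 • euclInclusion n (2 * n) y
    + (Real.cos (Real.pi * t / 2) * Real.sin (Real.pi * t / 2)) • shiftIncl n (x - y)

lemma analyticAt_rcos (x : ℝ) : AnalyticAt ℝ Real.cos x := by
  have h : AnalyticAt ℂ Complex.cos (x : ℂ) := Complex.differentiable_cos.analyticAt _
  have h2 : AnalyticAt ℝ (fun t : ℝ => (Complex.cos (t : ℂ)).re) x :=
    (Complex.reCLM.analyticAt _).comp ((h.restrictScalars).comp (Complex.ofRealCLM.analyticAt _))
  have : (fun t : ℝ => (Complex.cos (t : ℂ)).re) = Real.cos := by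
    funext t; exact Complex.cos_ofReal_re t
  rwa [this] at h2

lemma analyticAt_rsin (x : ℝ) : AnalyticAt ℝ Real.sin x := by
  have h : AnalyticAt ℂ Complex.sin (x : ℂ) := Complex.differentiable_sin.analyticAt _
  have h2 : AnalyticAt ℝ (fun t : ℝ => (Complex.sin (t : ℂ)).re) x :=
    (Complex.reCLM.analyticAt _).comp ((h.restrictScalars).comp (Complex.ofRealCLM.analyticAt _))
  have : (fun t : ℝ => (Complex.sin (t : ℂ)).re) = Real.sin := by
    funext t; exact Complex.sin_ofReal_re t
  rwa [this] at h2

lemma analyticAt_c (t : ℝ) : AnalyticAt ℝ (fun t => Real.cos (Real.pi * t / 2)) t := by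
  have harg : AnalyticAt ℝ (fun t : ℝ => Real.pi * t / 2) t := by
    exact ((analyticAt_const.mul analyticAt_id).div analyticAt_const (by norm_num))
  exact (analyticAt_rcos _).comp harg

lemma analyticAt_s (t : ℝ) : AnalyticAt ℝ (fun t => Real.sin (Real.pi * t / 2)) t := by
  have harg : AnalyticAt ℝ (fun t : ℝ => Real.pi * t / 2) t := by
    exact ((analyticAt_const.mul analyticAt_id).div analyticAt_const (by norm_num))
  exact (analyticAt_rsin _).comp harg

def blockEquiv (n : ℕ) : Fin n ⊕ Fin n ≃ Fin (2 * n) :=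
  finSumFinEquiv.trans (finCongr (two_mul n).symm)

lemma blockEquiv_inl (n : ℕ) (a : Fin n) : ((blockEquiv n (Sum.inl a) : Fin (2 * n)) : ℕ) = a := by
  simp [blockEquiv, finCongr_apply]

lemma blockEquiv_inr (n : ℕ) (a : Fin n) :
    ((blockEquiv n (Sum.inr a) : Fin (2 * n)) : ℕ) = n + a := by
  simp [blockEquiv, finCongr_apply]; omega

lemma leapMap_analytic (n : ℕ) (x y : EuclideanSpace ℝ (Fin n)) :
    AnalyticOnNhd ℝ (fun t => leapMap n x y t) univ := by
  intro t _
  unfold leapMap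
  exact (((analyticAt_c t).pow 2).smul analyticAt_const |>.add
      (((analyticAt_s t).pow 2).smul analyticAt_const)).add
    (((analyticAt_c t).mul (analyticAt_s t)).smul analyticAt_const)

lemma leapMap_apply_lt (n : ℕ) (x y : EuclideanSpace ℝ (Fin n)) (t : ℝ) (k : Fin (2 * n))
    (h : (k : ℕ) < n) :
    leapMap n x y t k = (Real.cos (Real.pi * t / 2)) ^ 2 * x ⟨k, h⟩
      + (Real.sin (Real.pi * t / 2)) ^ 2 * y ⟨k, h⟩ := by
  simp [leapMap, euclInclusion, shiftIncl, h, PiLp.add_apply, PiLp.smul_apply, smul_eq_mul]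

lemma leapMap_apply_ge (n : ℕ) (x y : EuclideanSpace ℝ (Fin n)) (t : ℝ) (k : Fin (2 * n))
    (h : ¬ (k : ℕ) < n) (h2 : (k : ℕ) - n < n) :
    leapMap n x y t k = Real.cos (Real.pi * t / 2) * Real.sin (Real.pi * t / 2)
      * (x ⟨(k : ℕ) - n, h2⟩ - y ⟨(k : ℕ) - n, h2⟩) := by
  simp [leapMap, euclInclusion, shiftIncl, h, PiLp.add_apply, PiLp.smul_apply, PiLp.sub_apply,
    smul_eq_mul]

lemma leapMap_dist_sq (n : ℕ) (x x' y y' : EuclideanSpace ℝ (Fin n)) (t : ℝ) :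
    dist (leapMap n x y t) (leapMap n x' y' t) ^ 2 =
      (Real.cos (Real.pi * t / 2)) ^ 2 * dist x x' ^ 2
        + (Real.sin (Real.pi * t / 2)) ^ 2 * dist y y' ^ 2 := by
  set c := Real.cos (Real.pi * t / 2) with hc
  set s := Real.sin (Real.pi * t / 2) with hs
  have hcs : s ^ 2 + c ^ 2 = 1 := Real.sin_sq_add_cos_sq _
  have hdist : ∀ (m : ℕ) (u v : EuclideanSpace ℝ (Fin m)),
      dist u v ^ 2 = ∑ a, (u a - v a) ^ 2 := by
    intro m u v
    rw [EuclideanSpace.dist_eq, Real.sq_sqrt (Finset.sum_nonneg fun a _ => sq_nonneg _)]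
    exact Finset.sum_congr rfl fun a _ => by rw [Real.dist_eq, sq_abs]
  rw [hdist, hdist, hdist]
  have e := blockEquiv n
  rw [← Equiv.sum_comp (blockEquiv n) fun k => (leapMap n x y t k - leapMap n x' y' t k) ^ 2,
    Fintype.sum_sum_type]
  have h1 : ∀ a : Fin n,
      (leapMap n x y t (blockEquiv n (Sum.inl a)) - leapMap n x' y' t (blockEquiv n (Sum.inl a))) ^ 2 =
      (c ^ 2 * (x a - x' a) + s ^ 2 * (y a - y' a)) ^ 2 := by
    intro a
    have hlt : ((blockEquiv n (Sum.inl a) : Fin (2 * n)) : ℕ) < n := by rw [blockEquiv_inl]; exact a.isLt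
    rw [leapMap_apply_lt n x y t _ hlt, leapMap_apply_lt n x' y' t _ hlt]
    have ha : (⟨((blockEquiv n (Sum.inl a) : Fin (2 * n)) : ℕ), hlt⟩ : Fin n) = a := by
      ext; exact blockEquiv_inl n a
    rw [ha]; ring
  have h2 : ∀ a : Fin n,
      (leapMap n x y t (blockEquiv n (Sum.inr a)) - leapMap n x' y' t (blockEquiv n (Sum.inr a))) ^ 2 =
      (c * s * ((x a - x' a) - (y a - y' a))) ^ 2 := by
    intro a
    have hge : ¬ ((blockEquiv n (Sum.inr a) : Fin (2 * n)) : ℕ) < n := by have := blockEquiv_inr n a; omega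
    have hsub : ((blockEquiv n (Sum.inr a) : Fin (2 * n)) : ℕ) - n < n := by
      have := blockEquiv_inr n a; have := a.isLt; omega
    rw [leapMap_apply_ge n x y t _ hge hsub, leapMap_apply_ge n x' y' t _ hge hsub]
    have ha : (⟨((blockEquiv n (Sum.inr a) : Fin (2 * n)) : ℕ) - n, hsub⟩ : Fin n) = a := by
      ext
      show ((blockEquiv n (Sum.inr a) : Fin (2 * n)) : ℕ) - n = (a : ℕ)
      have := blockEquiv_inr n a; omega
    rw [ha]; ring
  rw [Finset.sum_congr rfl fun a _ => h1 a, Finset.sum_congr rfl fun a _ => h2 a]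
  rw [Finset.mul_sum, Finset.mul_sum, ← Finset.sum_add_distrib, ← Finset.sum_add_distrib]
  refine Finset.sum_congr rfl fun a _ => ?_
  have hu := x a; have := x' a
  nlinarith [hcs, sq_nonneg (x a - x' a), sq_nonneg (y a - y' a)]

theorem exists_analytic_contraction (n N : ℕ)
    (p q : Fin N → EuclideanSpace ℝ (Fin n))
    (hcontr : ∀ i j : Fin N, i < j → dist (q i) (q j) ≤ dist (p i) (p j)) :
    ∃ P : ℝ → Fin N → EuclideanSpace ℝ (Fin (2 * n)),
      (∀ i, AnalyticOn ℝ (fun t => P t i) (Icc 0 1)) ∧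
      (∀ i, P 0 i = euclInclusion n (2 * n) (p i)) ∧
      (∀ i, P 1 i = euclInclusion n (2 * n) (q i)) ∧
      (∀ i j : Fin N, i < j → AntitoneOn (fun t => dist (P t i) (P t j)) (Icc 0 1)) := by
  refine ⟨fun t i => leapMap n (p i) (q i) t, ?_, ?_, ?_, ?_⟩
  · intro i
    exact ((leapMap_analytic n (p i) (q i)).analyticOn).mono (subset_univ _)
  · intro i
    unfold leapMap
    simp
  · intro i
    unfold leapMap
    norm_num [Real.cos_pi_div_two, Real.sin_pi_div_two]
  · intro i j hij
    intro a ha b hb hab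
    simp only
    have key : ∀ t : ℝ, dist (leapMap n (p i) (q i) t) (leapMap n (p j) (q j) t) =
        Real.sqrt ((Real.cos (Real.pi * t / 2)) ^ 2 * dist (p i) (p j) ^ 2
          + (Real.sin (Real.pi * t / 2)) ^ 2 * dist (q i) (q j) ^ 2) := by
      intro t
      rw [← leapMap_dist_sq n (p i) (p j) (q i) (q j) t, Real.sqrt_sq dist_nonneg]
    rw [key a, key b]
    apply Real.sqrt_le_sqrt
    set ca := Real.cos (Real.pi * a / 2)
    set cb := Real.cos (Real.pi * b / 2)
    have hsa : (Real.sin (Real.pi * a / 2)) ^ 2 = 1 - ca ^ 2 := by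
      have := Real.sin_sq_add_cos_sq (Real.pi * a / 2); linarith
    have hsb : (Real.sin (Real.pi * b / 2)) ^ 2 = 1 - cb ^ 2 := by
      have := Real.sin_sq_add_cos_sq (Real.pi * b / 2); linarith
    rw [hsa, hsb]
    have hpi := Real.pi_pos
    have ha0 := ha.1; have ha1 := ha.2
    have hb0 := hb.1; have hb1 := hb.2
    have hcb0 : 0 ≤ cb := by
      apply Real.cos_nonneg_of_mem_Icc
      constructor <;> nlinarith
    have hcba : cb ≤ ca := by
      apply Real.cos_le_cos_of_nonneg_of_le_pi
      · nlinarith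
      · nlinarith
      · nlinarith
    have hsq : cb ^ 2 ≤ ca ^ 2 := by nlinarith
    have hdq : dist (q i) (q j) ^ 2 ≤ dist (p i) (p j) ^ 2 := by
      have := hcontr i j hij
      have := dist_nonneg (x := q i) (y := q j)
      nlinarith
    nlinarith
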